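/- Let Q ∈ ℚ⟦X⟧ be the formal power series with constant coefficient 1 satisfying Q = 1 + X·Q³, and let g := 3·Q − Q² − 2 ∈ ℚ⟦X⟧. Let Y ∈ ℚ⟦X⟧ be the unique formal power series with zero constant coefficient satisfying (Q − 1)·(Y² + 1) = Y, and let Z ∈ ℚ⟦T⟧ be the unique formal power series with zero constant coefficient satisfying R·(Z² + 1) = Z, where R ∈ ℚ⟦T⟧ has zero constant coefficient and satisfies R = T + R². Then the substitution of g into Z equals Y in ℚ⟦X⟧. -/

import Mathlib

open PowerSeries

/-- Substitution of the power series `f` (assumed to have zero constant coefficient)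
into the power series `g`. -/
noncomputable def substInto (f g : PowerSeries ℚ) : PowerSeries ℚ :=
  PowerSeries.mk fun n =>
    PowerSeries.coeff n (Polynomial.aeval f (PowerSeries.trunc (n + 1) g))



lemma coeff_aeval_zero (f : PowerSeries ℚ) (hf : constantCoeff f = 0) (p : Polynomial ℚ)
    (n : ℕ) (hp : ∀ k ≤ n, p.coeff k = 0) : coeff n (Polynomial.aeval f p) = 0 := by
  rw [Polynomial.aeval_eq_sum_range, map_sum]
  apply Finset.sum_eq_zero
  intro k _
  rcases le_or_gt k n with h | h
  · rw [hp k h, zero_smul, map_zero]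
  · rw [coeff_smul]
    have hdvd : (X : PowerSeries ℚ) ^ k ∣ f ^ k :=
      pow_dvd_pow_of_dvd (PowerSeries.X_dvd_iff.2 hf) k
    rw [X_pow_dvd_iff] at hdvd
    rw [hdvd n h, smul_zero]

lemma coeff_aeval_congr (f : PowerSeries ℚ) (hf : constantCoeff f = 0) (p q : Polynomial ℚ)
    (n : ℕ) (hpq : ∀ k ≤ n, p.coeff k = q.coeff k) :
    coeff n (Polynomial.aeval f p) = coeff n (Polynomial.aeval f q) := by
  have := coeff_aeval_zero f hf (p - q) n (fun k hk => by
    simp [Polynomial.coeff_sub, hpq k hk])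
  rw [map_sub, map_sub, sub_eq_zero] at this
  exact this

lemma coeff_substInto (f g : PowerSeries ℚ) (hf : constantCoeff f = 0) (n m : ℕ)
    (h : n < m) :
    coeff n (substInto f g) = coeff n (Polynomial.aeval f (trunc m g)) := by
  rw [substInto, coeff_mk]
  apply coeff_aeval_congr f hf
  intro k hk
  rw [coeff_trunc, coeff_trunc, if_pos (Nat.lt_succ_of_le hk), if_pos (lt_of_le_of_lt hk h)]

lemma substInto_add (f g h : PowerSeries ℚ) :
    substInto f (g + h) = substInto f g + substInto f h := by
  ext n
  simp [substInto, coeff_mk, map_add]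

lemma substInto_one (f : PowerSeries ℚ) : substInto f 1 = 1 := by
  ext n
  simp [substInto, coeff_mk, trunc_one]

lemma substInto_X (f : PowerSeries ℚ) (hf : constantCoeff f = 0) : substInto f X = f := by
  ext n
  rw [coeff_substInto f X hf n (n + 2) (by omega)]
  rw [trunc_X_of (by omega)]
  simp

lemma substInto_mul (f g h : PowerSeries ℚ) (hf : constantCoeff f = 0) :
    substInto f (g * h) = substInto f g * substInto f h := by
  ext n
  rw [substInto, coeff_mk]
  rw [coeff_aeval_congr f hf (trunc (n+1) (g*h)) (trunc (n+1) g * trunc (n+1) h) n ?_]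
  · rw [map_mul, coeff_mul, coeff_mul]
    apply Finset.sum_congr rfl
    intro x hx
    rw [Finset.HasAntidiagonal.mem_antidiagonal] at hx
    rw [coeff_substInto f g hf x.1 (n+1) (by omega),
        coeff_substInto f h hf x.2 (n+1) (by omega)]
  · intro k hk
    rw [coeff_trunc, if_pos (Nat.lt_succ_of_le hk), Polynomial.coeff_mul, coeff_mul]
    apply Finset.sum_congr rfl
    intro x hx
    rw [Finset.HasAntidiagonal.mem_antidiagonal] at hx
    rw [coeff_trunc, coeff_trunc, if_pos (by omega), if_pos (by omega)]

lemma substInto_pow (f g : PowerSeries ℚ) (hf : constantCoeff f = 0) (k : ℕ) :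
    substInto f (g ^ k) = substInto f g ^ k := by
  induction k with
  | zero => simpa using substInto_one f
  | succ k ih => rw [pow_succ, substInto_mul _ _ _ hf, ih, pow_succ]

lemma constantCoeff_substInto (f g : PowerSeries ℚ) :
    constantCoeff (substInto f g) = constantCoeff g := by
  rw [← coeff_zero_eq_constantCoeff_apply, substInto, coeff_mk]
  have ht : trunc 1 g = Polynomial.C (constantCoeff g) := by
    ext k
    rw [coeff_trunc, Polynomial.coeff_C]
    rcases Nat.eq_zero_or_pos k with rfl | hk
    · simp
    · rw [if_neg (by omega), if_neg (by omega)]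
  rw [ht, Polynomial.aeval_C]
  simp

-- uniqueness helper
lemma eq_of_diff (a b u : PowerSeries ℚ) (hu : constantCoeff u = 0)
    (h : a - b = u * (a - b)) : a = b := by
  have h1 : (1 - u) * (a - b) = 0 := by linear_combination h
  have hunit : IsUnit (1 - u) := by
    rw [PowerSeries.isUnit_iff_constantCoeff]
    simp [hu]
  have := hunit.mul_right_eq_zero.mp h1
  exact sub_eq_zero.mp this

/-- Let `Q(0) = 1` with `Q = 1 + X·Q³` and `g := 3Q − Q² − 2`. Let `Y(0) = 0`
satisfy `(Q−1)·(Y² + 1) = Y` and `Z(0) = 0` satisfy `R·(Z² + 1) = Z`, where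
`R(0) = 0` and `R = T + R²`. Then substituting `g` into `Z` gives `Y`. -/
theorem subst_Y_series_quad
    (Q R Y Z : PowerSeries ℚ)
    (hQ0 : constantCoeff Q = 1) (hQ : Q = 1 + X * Q ^ 3)
    (hR0 : constantCoeff R = 0) (hR : R = X + R ^ 2)
    (hY0 : constantCoeff Y = 0) (hY : (Q - 1) * (Y ^ 2 + 1) = Y)
    (hZ0 : constantCoeff Z = 0) (hZ : R * (Z ^ 2 + 1) = Z) :
    substInto (3 * Q - Q ^ 2 - 2) Z = Y := by
  set g : PowerSeries ℚ := 3 * Q - Q ^ 2 - 2 with hg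
  have hg0 : constantCoeff g = 0 := by
    simp [hg, map_sub, map_mul, map_pow, map_ofNat, hQ0]; norm_num
  set S := substInto g R with hSdef
  set W := substInto g Z with hWdef
  -- S satisfies S = g + S^2
  have hSeq : S = g + S ^ 2 := by
    conv_lhs => rw [hSdef, hR]
    rw [substInto_add, substInto_X g hg0, substInto_pow _ _ hg0]
  -- Q - 1 satisfies same equation
  have hQeq : Q - 1 = g + (Q - 1) ^ 2 := by rw [hg]; ring
  -- uniqueness : S = Q - 1
  have hS0 : constantCoeff S = 0 := by rw [hSdef, constantCoeff_substInto, hR0]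
  have hSQ : S = Q - 1 := by
    apply eq_of_diff S (Q - 1) (S + (Q - 1))
    · simp [map_add, map_sub, hS0, hQ0]
    · linear_combination hSeq - hQeq
  -- W satisfies (Q-1)(W^2+1) = W
  have hWeq : (Q - 1) * (W ^ 2 + 1) = W := by
    rw [← hSQ]
    conv_rhs => rw [hWdef, ← hZ]
    rw [substInto_mul _ _ _ hg0, substInto_add, substInto_pow _ _ hg0, substInto_one]
  have hW0 : constantCoeff W = 0 := by rw [hWdef, constantCoeff_substInto, hZ0]
  -- uniqueness : W = Y
  apply eq_of_diff W Y ((Q - 1) * (W + Y))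
  · simp [map_mul, map_add, map_sub, hQ0, hW0, hY0]
  · linear_combination hY - hWeq
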